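/- Let X̃ ⊂ 𝔸⁷ be the hypersurface F = x² + u y² + 2 v y z + w z² + (u w - v²) t² = 0 over an algebraically closed field k of characteristic 0. Any point of X̃ where all seven partial derivatives of F vanish lies in S₁ ∪ S₂, where S₁ = {x = uw - v² = uy + vz = y² + wt² = z² + ut² = 0} and S₂ = {x = y = z = t = 0}. -/
import Mathlib


open MvPolynomial

noncomputable section

variable {k : Type*} [Field k] [IsAlgClosed k] [CharZero k]

abbrev S (k : Type*) [Field k] := MvPolynomial (Fin 7) k

def F : S k := (X 0)^2 + (X 4)*(X 1)^2 + 2*(X 5)*(X 1)*(X 2) + (X 6)*(X 2)^2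
  + ((X 4)*(X 6) - (X 5)^2)*(X 3)^2

/-- Any singular point of the hypersurface F = 0 lies in S₁ ∪ S₂, where the coordinates
of a point p are (x,y,z,t,u,v,w) = (p 0, p 1, p 2, p 3, p 4, p 5, p 6). -/
theorem singular_locus_in_S1_union_S2 (p : Fin 7 → k)
    (hF : eval p (F : S k) = 0)
    (hd : ∀ i : Fin 7, eval p (pderiv i (F : S k)) = 0) :
    (p 0 = 0 ∧ p 4 * p 6 - (p 5)^2 = 0 ∧ p 4 * p 1 + p 5 * p 2 = 0 ∧
      (p 1)^2 + p 6 * (p 3)^2 = 0 ∧ (p 2)^2 + p 4 * (p 3)^2 = 0) ∨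
    (p 0 = 0 ∧ p 1 = 0 ∧ p 2 = 0 ∧ p 3 = 0) := by
  have h2 : ∀ i : Fin 7, pderiv i (2 : S k) = 0 := by
    intro i; rw [← map_ofNat (C : k →+* S k) 2]; simp
  have h0 := hd 0; have h1 := hd 1; have h3 := hd 3
  have h4 := hd 4; have h6 := hd 6
  simp [F, h2] at h0 h1 h3 h4 h6
  rcases h3 with h3 | h3
  · left
    refine ⟨h0, h3, by linear_combination h1 / 2, by linear_combination h4, by linear_combination h6⟩
  · right
    have hy : p 1 = 0 := by
      have : p 1 ^ 2 = 0 := by rw [h3] at h4; linear_combination h4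
      exact pow_eq_zero_iff (by norm_num) |>.mp this
    have hz : p 2 = 0 := by
      have : p 2 ^ 2 = 0 := by rw [h3] at h6; linear_combination h6
      exact pow_eq_zero_iff (by norm_num) |>.mp this
    exact ⟨h0, hy, hz, h3⟩

end
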